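/- Σ_{i,j=1}^r a_{ij}² = (1/2)(Σ_{i=1}^r a_{ii})² + (1/2)(a_{11} − a_{22} − ⋯ − a_{rr})² + 2 Σ_{j=2}^r a_{1j}² − 2 Σ_{2 ≤ i < j ≤ r} (a_{ii} a_{jj} − a_{ij}²). -/

import Mathlib

open Finset

private lemma sym_split {r : ℕ} (s : Finset (Fin r)) (f : Fin r → Fin r → ℝ)
    (hf : ∀ i j, f i j = f j i) :
    ∑ i ∈ s, ∑ j ∈ s, f i j
      = ∑ i ∈ s, f i i + 2 * ∑ i ∈ s, ∑ j ∈ s.filter (fun j => i < j), f i j := by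
  have hlow : ∑ i ∈ s, ∑ j ∈ s.filter (fun j => j < i), f i j
      = ∑ i ∈ s, ∑ j ∈ s.filter (fun j => i < j), f i j := by
    calc ∑ i ∈ s, ∑ j ∈ s.filter (fun j => j < i), f i j
        = ∑ i ∈ s, ∑ j ∈ s, if j < i then f i j else 0 := by
          simp [Finset.sum_filter]
      _ = ∑ j ∈ s, ∑ i ∈ s, if j < i then f i j else 0 := Finset.sum_comm
      _ = ∑ j ∈ s, ∑ i ∈ s.filter (fun i => j < i), f i j := by
          simp [Finset.sum_filter]
      _ = ∑ i ∈ s, ∑ j ∈ s.filter (fun j => i < j), f i j := by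
          refine Finset.sum_congr rfl fun i _ => Finset.sum_congr rfl fun j _ => hf j i
  have hrow : ∀ i ∈ s, ∑ j ∈ s, f i j
      = (∑ j ∈ s.filter (fun j => i < j), f i j
        + (f i i + ∑ j ∈ s.filter (fun j => j < i), f i j)) := by
    intro i hi
    rw [← Finset.sum_filter_add_sum_filter_not s (fun j => i < j)]
    congr 1
    have h : s.filter (fun j => ¬ i < j)
        = insert i (s.filter (fun j => j < i)) := by
      ext j
      simp only [Finset.mem_filter, Finset.mem_insert, not_lt]
      constructor
      · rintro ⟨hj, hle⟩
        rcases lt_or_eq_of_le hle with h | h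
        · exact Or.inr ⟨hj, h⟩
        · exact Or.inl h
      · rintro (rfl | ⟨hj, hlt⟩)
        · exact ⟨hi, le_refl _⟩
        · exact ⟨hj, le_of_lt hlt⟩
    rw [h, Finset.sum_insert (by simp)]
  rw [Finset.sum_congr rfl hrow, Finset.sum_add_distrib, Finset.sum_add_distrib, hlow]
  ring

theorem stmt_0 (r : ℕ) (hr : 0 < r) (a : Fin r → Fin r → ℝ)
    (hsymm : ∀ i j, a i j = a j i) :
    ∑ i, ∑ j, (a i j) ^ 2 =
      (1 / 2) * (∑ i, a i i) ^ 2
        + (1 / 2) * (a ⟨0, hr⟩ ⟨0, hr⟩ -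
            ∑ i ∈ Finset.univ.filter (fun i => i ≠ ⟨0, hr⟩), a i i) ^ 2
        + 2 * ∑ j ∈ Finset.univ.filter (fun j => j ≠ ⟨0, hr⟩), (a ⟨0, hr⟩ j) ^ 2
        - 2 * ∑ i ∈ Finset.univ.filter (fun i => i ≠ ⟨0, hr⟩),
            ∑ j ∈ Finset.univ.filter (fun j => i < j),
              (a i i * a j j - (a i j) ^ 2) := by
  set z : Fin r := ⟨0, hr⟩ with hz
  have hzbot : ∀ i : Fin r, ¬ i < z := fun i h => Nat.not_lt_zero i.1 h
  have hfz : (Finset.univ.filter (fun i : Fin r => i ≠ z)) = Finset.univ.erase z :=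
    Finset.filter_ne' _ _
  set s := Finset.univ.erase z with hs
  have hzs : z ∉ s := Finset.notMem_erase _ _
  have hfilter : ∀ i ∈ s, Finset.univ.filter (fun j => i < j) = s.filter (fun j => i < j) := by
    intro i hi
    rw [hs, Finset.filter_erase, Finset.erase_eq_of_notMem]
    simp [hzbot i]
  have hsplit : ∀ f : Fin r → ℝ, ∑ i, f i = f z + ∑ i ∈ s, f i := by
    intro f
    exact (Finset.add_sum_erase _ f (Finset.mem_univ z)).symm
  set A := a z z with hA
  set S1 := ∑ j ∈ s, (a z j) ^ 2 with hS1
  set Dg := ∑ i ∈ s, a i i with hDg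
  set Sd := ∑ i ∈ s, (a i i) ^ 2 with hSd
  set P := ∑ i ∈ s, ∑ j ∈ s.filter (fun j => i < j), (a i j) ^ 2 with hP
  set E := ∑ i ∈ s, ∑ j ∈ s.filter (fun j => i < j), (a i i * a j j) with hE
  -- LHS
  have h1 : ∑ i, ∑ j, (a i j) ^ 2 = A ^ 2 + S1 + S1 + (Sd + 2 * P) := by
    rw [hsplit (fun i => ∑ j, (a i j) ^ 2)]
    have hrowz : ∑ j, (a z j) ^ 2 = A ^ 2 + S1 := by
      rw [hsplit (fun j => (a z j) ^ 2)]
    have hrowi : ∀ i ∈ s, ∑ j, (a i j) ^ 2 = (a z i) ^ 2 + ∑ j ∈ s, (a i j) ^ 2 := by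
      intro i hi
      rw [hsplit (fun j => (a i j) ^ 2), hsymm i z]
    rw [hrowz, Finset.sum_congr rfl hrowi, Finset.sum_add_distrib, ← hS1]
    have hQ : ∑ i ∈ s, ∑ j ∈ s, (a i j) ^ 2 = Sd + 2 * P := by
      have := sym_split s (fun i j => (a i j) ^ 2) (fun i j => by rw [hsymm])
      simpa [hSd, hP] using this
    rw [hQ]; ring
  have h2 : ∑ i, a i i = A + Dg := hsplit (fun i => a i i)
  have h4 : Dg ^ 2 = Sd + 2 * E := by
    have hm : Dg * Dg = ∑ i ∈ s, ∑ j ∈ s, (a i i * a j j) := by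
      rw [Finset.sum_mul_sum]
    have := sym_split s (fun i j => a i i * a j j) (fun i j => by ring)
    calc Dg ^ 2 = Dg * Dg := sq Dg
      _ = Sd + 2 * E := by
          rw [hm, this]
          congr 1
          · rw [hSd]; exact Finset.sum_congr rfl fun i _ => (sq (a i i)).symm
  have h5 : ∑ i ∈ s, ∑ j ∈ Finset.univ.filter (fun j => i < j),
      (a i i * a j j - (a i j) ^ 2) = E - P := by
    rw [hE, hP, ← Finset.sum_sub_distrib]
    refine Finset.sum_congr rfl fun i hi => ?_
    rw [hfilter i hi, Finset.sum_sub_distrib]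
  rw [hfz, h1, h2, h5, ← hDg]
  linear_combination -h4
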